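/- Let (α^k, μ^k) ∈ D_M^↑ × D_ℝ^↑ for k ∈ ℕ and let (α,μ) ∈ D_M^↑ × D_ℝ^↑ be such that t ↦ α_t is continuous in the weak topology with α_t atomless for every t, and μ is continuous. Suppose that for every T > 0, sup_{t∈[0,T]} d_LP(α^k_t, α_t) → 0 and sup_{t∈[0,T]} |μ^k(t) − μ(t)| → 0 as k → ∞, where d_LP is the Lévy–Prokhorov metric on M. Let (ξ^k, β^k, ι^k) and (ξ, β, ι) denote the unique solutions of the MVSP for (α^k, μ^k) and (α,μ), respectively. Then for every T > 0, sup_{t∈[0,T]} d_LP(ξ^k_t, ξ_t) → 0, sup_{t∈[0,T]} d_LP(β^k_t, β_t) → 0, and sup_{t∈[0,T]} |ι^k(t) − ι(t)| → 0 as k → ∞. -/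

import Mathlib

open MeasureTheory Filter Set
open scoped NNReal ENNReal BoundedContinuousFunction Topology

noncomputable section

/-- Càdlàg on `[0,∞)`: right-continuous at every `t ≥ 0`, with left limits at
every `t > 0` (along `[0,t)`). -/
def CadlagOn {E : Type*} [TopologicalSpace E] (f : ℝ → E) : Prop :=
  (∀ t : ℝ, 0 ≤ t → ContinuousWithinAt f (Set.Ici t) t) ∧
  (∀ t : ℝ, 0 < t → ∃ l : E, Filter.Tendsto f (nhdsWithin t (Set.Ico 0 t)) (nhds l))

/-- `D_ℝ`: real-valued càdlàg paths on `[0,∞)`. -/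
def DR (f : ℝ → ℝ) : Prop := CadlagOn f

/-- `D_ℝ^↑`: nonnegative nondecreasing real-valued càdlàg paths on `[0,∞)`. -/
def DRup (f : ℝ → ℝ) : Prop :=
  CadlagOn f ∧ (∀ t : ℝ, 0 ≤ t → 0 ≤ f t) ∧ MonotoneOn f (Set.Ici 0)

/-- `D_M`: càdlàg paths with values in the space of finite nonnegative measures
on `[0,∞)`, equipped with the topology of weak convergence. -/
def DM (ζ : ℝ → FiniteMeasure ℝ≥0) : Prop := CadlagOn ζ

/-- `D_M^↑`: paths in `D_M` such that `t ↦ ∫ f dζ_t` is nondecreasing for every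
nonnegative bounded continuous `f` on `[0,∞)`. -/
def DMup (ζ : ℝ → FiniteMeasure ℝ≥0) : Prop :=
  CadlagOn ζ ∧
  ∀ f : ℝ≥0 →ᵇ ℝ≥0, MonotoneOn (fun t => (ζ t).testAgainstNN f) (Set.Ici 0)

/-- First component of the Skorokhod map on the half-line:
`Γ₁[ψ](t) = ψ(t) − inf_{s∈[0,t]} (ψ(s) ∧ 0)`. -/
def Gamma1 (ψ : ℝ → ℝ) (t : ℝ) : ℝ :=
  ψ t - sInf ((fun s => min (ψ s) 0) '' Set.Icc 0 t)

/-- Second component of the Skorokhod map on the half-line: `Γ₂[ψ] = Γ₁[ψ] − ψ`. -/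
def Gamma2 (ψ : ℝ → ℝ) (t : ℝ) : ℝ := Gamma1 ψ t - ψ t

/-- Extension of `g : [0,∞) → ℝ` by `0` on `(-∞,0)`. -/
def lsExt (g : ℝ → ℝ) : ℝ → ℝ := fun t => if t < 0 then 0 else g t

/- The Lebesgue–Stieltjes measure `m^g(B) = g(0)δ₀(B) + ∫_{(0,∞)} 1_B dg` of a
nonnegative nondecreasing right-continuous `g` on `[0,∞)`, realized as the
Stieltjes measure of the extension of `g` by `0` on `(-∞,0)`. -/
open scoped Classical in
def lsMeasure (g : ℝ → ℝ) : Measure ℝ :=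
  if h : Monotone (lsExt g) ∧ ∀ t, ContinuousWithinAt (lsExt g) (Set.Ici t) t then
    StieltjesFunction.measure ⟨lsExt g, h.1, h.2⟩
  else 0

/-- The measure-valued Skorokhod problem (MVSP): `(ξ,β,ι)` solves the MVSP for
the data `(α,μ)`. -/
def SolvesMVSP (α : ℝ → FiniteMeasure ℝ≥0) (μ : ℝ → ℝ)
    (ξ β : ℝ → FiniteMeasure ℝ≥0) (ι : ℝ → ℝ) : Prop :=
  (∀ x : ℝ≥0, ∀ t : ℝ, 0 ≤ t →
    (ξ t (Set.Iic x) : ℝ) = (α t (Set.Iic x) : ℝ) - μ t + (β t (Set.Ioi x) : ℝ) + ι t) ∧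
  (∀ x : ℝ≥0, ∀ᵐ t ∂(lsMeasure (fun s => (β s (Set.Ioi x) : ℝ))), (ξ t (Set.Iic x) : ℝ) = 0) ∧
  (∀ x : ℝ≥0, ∀ᵐ t ∂(lsMeasure ι), (ξ t (Set.Iic x) : ℝ) = 0) ∧
  (∀ t : ℝ, 0 ≤ t → (β t Set.univ : ℝ) + ι t = μ t)

/-- System (30): `(ξ,β,ι)` solves the MVSP for `(α, μ+ρ)` and `ξ_t[0,t) = 0`
for every `t > 0`. -/
def Solves30 (α : ℝ → FiniteMeasure ℝ≥0) (μ : ℝ → ℝ)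
    (ξ β : ℝ → FiniteMeasure ℝ≥0) (ι ρ : ℝ → ℝ) : Prop :=
  SolvesMVSP α (fun t => μ t + ρ t) ξ β ι ∧
  ∀ t : ℝ, 0 < t → (ξ t (Set.Iio (Real.toNNReal t)) : ℝ) = 0

/-- A minimal solution of system (30): a solution (lying in the appropriate
path spaces) whose reneging function `ρ` is pointwise below that of any other
solution. -/
def IsMinimalSol30 (α : ℝ → FiniteMeasure ℝ≥0) (μ : ℝ → ℝ)
    (ξ β : ℝ → FiniteMeasure ℝ≥0) (ι ρ : ℝ → ℝ) : Prop :=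
  (DM ξ ∧ DMup β ∧ DRup ι ∧ DRup ρ ∧ Solves30 α μ ξ β ι ρ) ∧
  ∀ (ξ' β' : ℝ → FiniteMeasure ℝ≥0) (ι' ρ' : ℝ → ℝ),
    DM ξ' → DMup β' → DRup ι' → DRup ρ' → Solves30 α μ ξ' β' ι' ρ' →
    ∀ t : ℝ, 0 ≤ t → ρ t ≤ ρ' t

/-- The (topological) support of a finite measure on `[0,∞)`: the set of points
all of whose open neighborhoods have positive measure. -/
def measSupport (ν : FiniteMeasure ℝ≥0) : Set ℝ≥0 :=
  {x : ℝ≥0 | ∀ u : Set ℝ≥0, IsOpen u → x ∈ u → ν u ≠ 0}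

/-- `σ(ν) = inf supp[ν]`, with value `∞` when `ν = 0`. -/
def sigmaOf (ν : FiniteMeasure ℝ≥0) : ℝ≥0∞ :=
  sInf ((fun x : ℝ≥0 => (x : ℝ≥0∞)) '' measSupport ν)

/-- Assumption A on the data `(α,μ)`. -/
def AssumptionA (α : ℝ → FiniteMeasure ℝ≥0) (μ : ℝ → ℝ) : Prop :=
  (∃ (ξ0 : FiniteMeasure ℝ≥0) (a0 : ℝ → FiniteMeasure ℝ≥0)
      (lam : ℝ → ℝ) (ν : FiniteMeasure ℝ≥0),
    (∀ x : ℝ≥0, ξ0 {x} = 0) ∧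
    ContinuousOn a0 (Set.Ici 0) ∧ DMup a0 ∧
    (∀ t : ℝ, 0 ≤ t → ∀ x : ℝ≥0, a0 t {x} = 0) ∧
    Measurable lam ∧ (∀ s : ℝ, 0 ≤ s → 0 ≤ lam s) ∧
    (∀ t : ℝ, 0 ≤ t → α t = a0 t + ξ0) ∧
    (∀ t : ℝ, 0 ≤ t → ∀ x : ℝ≥0, (a0 t (Set.Iic x) : ℝ) =
      ∫ s in Set.Icc (0:ℝ) t,
        (if s ≤ (x:ℝ) then lam s * (ν (Set.Iic (Real.toNNReal ((x:ℝ) - s))) : ℝ) else 0)) ∧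
    (∀ t : ℝ, 0 ≤ t →
      Filter.Tendsto (fun x : ℝ≥0 =>
          sSup ((fun s => lam s * (ν (Set.Iic x) : ℝ)) '' Set.Icc (0:ℝ) t))
        (nhdsWithin 0 (Set.Ioi 0)) (nhds 0))) ∧
  (∃ μ0 m : ℝ → ℝ,
    ContinuousOn μ0 (Set.Ici 0) ∧ (∀ t : ℝ, 0 ≤ t → 0 ≤ μ0 t) ∧
    MonotoneOn μ0 (Set.Ici 0) ∧
    Measurable m ∧ (∀ s : ℝ, 0 ≤ s → 0 ≤ m s) ∧
    (∀ t : ℝ, 0 ≤ t → MeasureTheory.IntegrableOn m (Set.Icc 0 t)) ∧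
    (∀ t : ℝ, 0 ≤ t → 0 < sInf (m '' Set.Icc (0:ℝ) t)) ∧
    (∀ t : ℝ, 0 ≤ t → μ t = μ0 t + ∫ s in Set.Icc (0:ℝ) t, m s))

section Aux

theorem meas_le_closed (μ ν : Measure ℝ≥0) [IsFiniteMeasure μ] [IsFiniteMeasure ν]
    (h : ∀ f : ℝ≥0 →ᵇ ℝ≥0, (∫⁻ x, f x ∂μ) ≤ ∫⁻ x, f x ∂ν) {F : Set ℝ≥0} (hF : IsClosed F) :
    μ F ≤ ν F := by
  set δs : ℕ → ℝ := fun n => 1/(n+1) with hδs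
  have δpos : ∀ n, 0 < δs n := fun n => by positivity
  have hδ : Tendsto δs atTop (𝓝 0) := tendsto_one_div_add_atTop_nhds_zero_nat
  exact le_of_tendsto_of_tendsto'
    (tendsto_lintegral_thickenedIndicator_of_isClosed μ hF δpos hδ)
    (tendsto_lintegral_thickenedIndicator_of_isClosed ν hF δpos hδ) (fun n => h _)

theorem meas_le_meas (μ ν : Measure ℝ≥0) [IsFiniteMeasure μ] [IsFiniteMeasure ν]
    (h : ∀ f : ℝ≥0 →ᵇ ℝ≥0, (∫⁻ x, f x ∂μ) ≤ ∫⁻ x, f x ∂ν) {A : Set ℝ≥0}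
    (hA : MeasurableSet A) : μ A ≤ ν A := by
  rw [hA.measure_eq_iSup_isClosed_of_ne_top (measure_ne_top μ A)]
  exact iSup_le fun K => iSup_le fun hK => iSup_le fun hKc =>
    (meas_le_closed μ ν h hKc).trans (measure_mono hK)

theorem fm_le_fm (μ ν : FiniteMeasure ℝ≥0)
    (h : ∀ f : ℝ≥0 →ᵇ ℝ≥0, μ.testAgainstNN f ≤ ν.testAgainstNN f) {A : Set ℝ≥0}
    (hA : MeasurableSet A) : μ A ≤ ν A := by
  have key : (μ : Measure ℝ≥0) A ≤ (ν : Measure ℝ≥0) A := by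
    refine meas_le_meas _ _ (fun f => ?_) hA
    have hf := h f
    rwa [← ENNReal.coe_le_coe, FiniteMeasure.testAgainstNN_coe_eq,
      FiniteMeasure.testAgainstNN_coe_eq] at hf
  rw [← ENNReal.coe_le_coe, FiniteMeasure.ennreal_coeFn_eq_coeFn_toMeasure,
    FiniteMeasure.ennreal_coeFn_eq_coeFn_toMeasure]
  exact key

theorem fmR_nonneg (ν : FiniteMeasure ℝ≥0) (A : Set ℝ≥0) : (0:ℝ) ≤ (ν A : ℝ) :=
  (ν A).coe_nonneg

theorem fmR_mono (ν : FiniteMeasure ℝ≥0) {A B : Set ℝ≥0} (h : A ⊆ B) :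
    (ν A : ℝ) ≤ (ν B : ℝ) := by exact_mod_cast ν.apply_mono h

theorem fmR_union (ν : FiniteMeasure ℝ≥0) {A B : Set ℝ≥0} (h : Disjoint A B)
    (hB : MeasurableSet B) : (ν (A ∪ B) : ℝ) = (ν A : ℝ) + (ν B : ℝ) := by
  have : (ν (A ∪ B) : ℝ≥0∞) = (ν A : ℝ≥0∞) + (ν B : ℝ≥0∞) := by
    rw [FiniteMeasure.ennreal_coeFn_eq_coeFn_toMeasure,
      FiniteMeasure.ennreal_coeFn_eq_coeFn_toMeasure,
      FiniteMeasure.ennreal_coeFn_eq_coeFn_toMeasure]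
    exact measure_union h hB
  have h2 : (ν (A ∪ B) : ℝ≥0) = (ν A : ℝ≥0) + (ν B : ℝ≥0) := by exact_mod_cast this
  exact_mod_cast h2

theorem fmR_Iic_add_Ioc (ν : FiniteMeasure ℝ≥0) {a b : ℝ≥0} (hab : a ≤ b) :
    (ν (Iic b) : ℝ) = (ν (Iic a) : ℝ) + (ν (Ioc a b) : ℝ) := by
  rw [← fmR_union ν (Iic_disjoint_Ioc le_rfl) measurableSet_Ioc, Iic_union_Ioc_eq_Iic hab]

theorem fmR_Iic_add_Ioi (ν : FiniteMeasure ℝ≥0) (a : ℝ≥0) :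
    (ν univ : ℝ) = (ν (Iic a) : ℝ) + (ν (Ioi a) : ℝ) := by
  rw [← fmR_union ν (Iic_disjoint_Ioi le_rfl) measurableSet_Ioi, Iic_union_Ioi]

theorem dmup_mono {ζ : ℝ → FiniteMeasure ℝ≥0} (hζ : DMup ζ) {s t : ℝ} (hs : 0 ≤ s)
    (hst : s ≤ t) {A : Set ℝ≥0} (hA : MeasurableSet A) : (ζ s A : ℝ) ≤ (ζ t A : ℝ) := by
  have : ζ s A ≤ ζ t A :=
    fm_le_fm _ _ (fun f => hζ.2 f hs (hs.trans hst) hst) hA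
  exact_mod_cast this

theorem mass_split {ζ : ℝ → FiniteMeasure ℝ≥0} : True := trivial
theorem dmup_rc {ζ : ℝ → FiniteMeasure ℝ≥0} (hζ : DMup ζ) {A : Set ℝ≥0}
    (hA : MeasurableSet A) {t : ℝ} (ht : 0 ≤ t) :
    ContinuousWithinAt (fun s => (ζ s A : ℝ)) (Ici t) t := by
  have hmass : Tendsto (fun s => ((ζ s).mass : ℝ)) (𝓝[Ici t] t) (𝓝 ((ζ t).mass : ℝ)) :=
    (NNReal.continuous_coe.tendsto _).comp
      ((FiniteMeasure.continuous_mass.tendsto _).comp (hζ.1.1 t ht))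
  have hsplit : ∀ s : ℝ, ((ζ s).mass : ℝ) = (ζ s A : ℝ) + (ζ s Aᶜ : ℝ) := by
    intro s
    have h := fmR_union (ζ s) (disjoint_compl_right (a := A)) hA.compl
    rw [union_compl_self] at h
    exact h
  have hub : ∀ᶠ s in 𝓝[Ici t] t, (ζ s A : ℝ) ≤ (ζ t A : ℝ) + (((ζ s).mass : ℝ) - ((ζ t).mass : ℝ)) := by
    filter_upwards [eventually_mem_nhdsWithin] with s hs
    have h1 : (ζ t Aᶜ : ℝ) ≤ (ζ s Aᶜ : ℝ) := dmup_mono hζ ht hs hA.compl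
    have e1 := hsplit s; have e2 := hsplit t
    linarith
  have hlb : ∀ᶠ s in 𝓝[Ici t] t, (ζ t A : ℝ) - (((ζ s).mass : ℝ) - ((ζ t).mass : ℝ)) ≤ (ζ s A : ℝ) := by
    filter_upwards [eventually_mem_nhdsWithin] with s hs
    have h1 : (ζ t A : ℝ) ≤ (ζ s A : ℝ) := dmup_mono hζ ht hs hA
    have h2 : (ζ t Aᶜ : ℝ) ≤ (ζ s Aᶜ : ℝ) := dmup_mono hζ ht hs hA.compl
    have e1 := hsplit s; have e2 := hsplit t
    linarith
  have hquant : Tendsto (fun s => ((ζ s).mass : ℝ) - ((ζ t).mass : ℝ)) (𝓝[Ici t] t) (𝓝 0) := by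
    have := hmass.sub (tendsto_const_nhds : Tendsto (fun _ : ℝ => ((ζ t).mass : ℝ)) (𝓝[Ici t] t) _)
    simpa using this
  have hU : Tendsto (fun s => (ζ t A : ℝ) + (((ζ s).mass : ℝ) - ((ζ t).mass : ℝ)))
      (𝓝[Ici t] t) (𝓝 ((ζ t A : ℝ))) := by
    simpa using tendsto_const_nhds.add hquant
  have hL : Tendsto (fun s => (ζ t A : ℝ) - (((ζ s).mass : ℝ) - ((ζ t).mass : ℝ)))
      (𝓝[Ici t] t) (𝓝 ((ζ t A : ℝ))) := by
    simpa using tendsto_const_nhds.sub hquant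
  exact tendsto_of_tendsto_of_tendsto_of_le_of_le' hL hU hlb hub

end Aux
section Stieltjes

theorem lsExt_of (g : ℝ → ℝ) (h0 : ∀ t, 0 ≤ t → 0 ≤ g t) (hm : MonotoneOn g (Ici 0))
    (hrc : ∀ t, 0 ≤ t → ContinuousWithinAt g (Ici t) t) :
    Monotone (lsExt g) ∧ ∀ t, ContinuousWithinAt (lsExt g) (Ici t) t := by
  constructor
  · intro a b hab
    unfold lsExt
    split_ifs with ha hb hb
    · exact le_rfl
    · exact h0 b (not_lt.mp hb)
    · exact absurd (not_lt.mp ha) (not_le.mpr (lt_of_le_of_lt hab hb))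
    · exact hm (not_lt.mp ha) (not_lt.mp hb) hab
  · intro s
    rcases le_or_gt 0 s with hs | hs
    · refine (hrc s hs).congr (fun y hy => ?_) ?_
      · exact if_neg (not_lt.mpr (hs.trans hy))
      · exact if_neg (not_lt.mpr hs)
    · have hev : lsExt g =ᶠ[𝓝[Ici s] s] (fun _ => (0:ℝ)) := by
        filter_upwards [mem_nhdsWithin_of_mem_nhds (Iio_mem_nhds hs)] with y hy
        exact if_pos hy
      exact (continuousWithinAt_const (b := (0:ℝ))).congr_of_eventuallyEq hev (if_pos hs)

theorem lsMeasure_def {g : ℝ → ℝ}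
    (h : Monotone (lsExt g) ∧ ∀ t, ContinuousWithinAt (lsExt g) (Ici t) t) :
    lsMeasure g = (⟨lsExt g, h.1, h.2⟩ : StieltjesFunction ℝ).measure := by
  unfold lsMeasure
  exact dif_pos h

theorem lsMeasure_Ioc {g : ℝ → ℝ}
    (h : Monotone (lsExt g) ∧ ∀ t, ContinuousWithinAt (lsExt g) (Ici t) t) (a b : ℝ) :
    lsMeasure g (Ioc a b) = ENNReal.ofReal (lsExt g b - lsExt g a) := by
  rw [lsMeasure_def h]
  exact StieltjesFunction.measure_Ioc _ a b

theorem eta_rep (ψ g₁ g₂ z : ℝ → ℝ) {t : ℝ} (ht : 0 ≤ t)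
    (h₁ : Monotone (lsExt g₁) ∧ ∀ s, ContinuousWithinAt (lsExt g₁) (Ici s) s)
    (h₂ : Monotone (lsExt g₂) ∧ ∀ s, ContinuousWithinAt (lsExt g₂) (Ici s) s)
    (hz : ∀ s, 0 ≤ s → 0 ≤ z s)
    (heq : ∀ s, 0 ≤ s → z s = ψ s + (g₁ s + g₂ s))
    (ha₁ : ∀ᵐ s ∂(lsMeasure g₁), z s = 0)
    (ha₂ : ∀ᵐ s ∂(lsMeasure g₂), z s = 0) :
    g₁ t + g₂ t = Gamma2 ψ t := by
  classical
  set I := sInf ((fun s => min (ψ s) 0) '' Icc 0 t) with hIdef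
  have hne : ((fun s => min (ψ s) 0) '' Icc 0 t).Nonempty :=
    ⟨_, mem_image_of_mem _ (left_mem_Icc.mpr ht)⟩
  have hls₁ : ∀ s : ℝ, 0 ≤ s → lsExt g₁ s = g₁ s := fun s hs => if_neg (not_lt.mpr hs)
  have hls₂ : ∀ s : ℝ, 0 ≤ s → lsExt g₂ s = g₂ s := fun s hs => if_neg (not_lt.mpr hs)
  have hmono : ∀ {a b : ℝ}, 0 ≤ a → a ≤ b → g₁ a + g₂ a ≤ g₁ b + g₂ b := by
    intro a b ha hab
    have e1 := h₁.1 hab; have e2 := h₂.1 hab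
    rw [hls₁ a ha, hls₁ b (ha.trans hab)] at e1
    rw [hls₂ a ha, hls₂ b (ha.trans hab)] at e2
    linarith
  have hnn : ∀ s, 0 ≤ s → 0 ≤ g₁ s + g₂ s := by
    intro s hs
    have e1 := h₁.1 (show (-1:ℝ) ≤ s by linarith)
    have e2 := h₂.1 (show (-1:ℝ) ≤ s by linarith)
    rw [hls₁ s hs] at e1; rw [hls₂ s hs] at e2
    have o1 : lsExt g₁ (-1) = 0 := if_pos (by norm_num)
    have o2 : lsExt g₂ (-1) = 0 := if_pos (by norm_num)
    rw [o1] at e1; rw [o2] at e2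
    linarith
  have hbdd : BddBelow ((fun s => min (ψ s) 0) '' Icc 0 t) := by
    refine ⟨-(g₁ t + g₂ t), ?_⟩
    rintro y ⟨s, hs, rfl⟩
    show -(g₁ t + g₂ t) ≤ min (ψ s) 0
    rcases le_or_gt 0 (ψ s) with h | h
    · rw [min_eq_right h]; have := hnn t ht; linarith
    · rw [min_eq_left h.le]
      have hzs := hz s hs.1
      have he := heq s hs.1
      have hmm := hmono hs.1 hs.2
      linarith
  have hIle : ∀ s ∈ Icc 0 t, I ≤ min (ψ s) 0 := fun s hs =>
    csInf_le hbdd (mem_image_of_mem _ hs)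
  have hI0 : I ≤ 0 := (hIle t (right_mem_Icc.mpr ht)).trans (min_le_right _ _)
  have hlow : -I ≤ g₁ t + g₂ t := by
    have hkey : -(g₁ t + g₂ t) ≤ I := by
      refine le_csInf hne ?_
      rintro y ⟨s, hs, rfl⟩
      show -(g₁ t + g₂ t) ≤ min (ψ s) 0
      rcases le_or_gt 0 (ψ s) with h | h
      · rw [min_eq_right h]; have := hnn t ht; linarith
      · rw [min_eq_left h.le]
        have h1 := hz s hs.1; have h2 := heq s hs.1; have h3 := hmono hs.1 hs.2
        linarith
    linarith
  have hupp : g₁ t + g₂ t ≤ -I := by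
    by_contra hcon
    push_neg at hcon
    set S : Set ℝ := {s | s ∈ Icc 0 t ∧ -I < g₁ s + g₂ s} with hSdef
    have htS : t ∈ S := ⟨right_mem_Icc.mpr ht, hcon⟩
    have hSb : BddBelow S := ⟨0, fun s hs => hs.1.1⟩
    set u := sInf S with hudef
    have hu0 : 0 ≤ u := le_csInf ⟨t, htS⟩ fun s hs => hs.1.1
    have hut : u ≤ t := csInf_le hSb htS
    have key1 : ∀ s, u < s → s ≤ t → -I < g₁ s + g₂ s := by
      intro s hus hst
      obtain ⟨s', hs'S, hs's⟩ := (csInf_lt_iff hSb ⟨t, htS⟩).mp hus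
      exact lt_of_lt_of_le hs'S.2 (hmono hs'S.1.1 hs's.le)
    have zpos : ∀ s, 0 ≤ s → s ≤ t → -I < g₁ s + g₂ s → ¬ z s = 0 := by
      intro s hs hst hgs h0
      have h1 : I ≤ min (ψ s) 0 := hIle s ⟨hs, hst⟩
      have h2 : min (ψ s) 0 ≤ ψ s := min_le_left _ _
      have he := heq s hs
      rw [h0] at he
      linarith
    have hn₁ : lsMeasure g₁ {s | ¬ z s = 0} = 0 := ae_iff.mp ha₁
    have hn₂ : lsMeasure g₂ {s | ¬ z s = 0} = 0 := ae_iff.mp ha₂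
    set m : Measure ℝ := lsMeasure g₁ + lsMeasure g₂ with hmdef
    have hmnull : ∀ E : Set ℝ, E ⊆ {s | ¬ z s = 0} → m E = 0 := by
      intro E hE
      have := measure_mono_null hE hn₁
      have := measure_mono_null hE hn₂
      simp [hmdef, Measure.add_apply, *]
    set H : ℝ → ℝ := fun s => lsExt g₁ s + lsExt g₂ s with hHdef
    have hHmono : Monotone H := h₁.1.add h₂.1
    have hHIoc : ∀ a b : ℝ, a ≤ b → m (Ioc a b) = ENNReal.ofReal (H b - H a) := by
      intro a b hab
      rw [hmdef, Measure.add_apply, lsMeasure_Ioc h₁, lsMeasure_Ioc h₂,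
        ← ENNReal.ofReal_add (sub_nonneg.mpr (h₁.1 hab)) (sub_nonneg.mpr (h₂.1 hab))]
      congr 1
      simp [hHdef]; ring
    have hHt : ∀ s : ℝ, 0 ≤ s → H s = g₁ s + g₂ s := by
      intro s hs; rw [hHdef]; dsimp only; rw [hls₁ s hs, hls₂ s hs]
    -- Step 1 : H u = H t, hence u ∈ S morally
    have hIoc0 : m (Ioc u t) = 0 :=
      hmnull _ (fun s hs => zpos s (hu0.trans hs.1.le) hs.2 (key1 s hs.1 hs.2))
    have hHut : H t ≤ H u := by
      rw [hHIoc u t hut] at hIoc0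
      have := ENNReal.ofReal_eq_zero.mp hIoc0
      linarith
    have huS : -I < g₁ u + g₂ u := by
      have := hHt u hu0; have := hHt t ht
      have := hHmono hut
      linarith
    -- Step 2 : Icc u t is null
    have hIcc0 : m (Icc u t) = 0 := by
      refine hmnull _ (fun s hs => ?_)
      have hs0 : 0 ≤ s := hu0.trans hs.1
      refine zpos s hs0 hs.2 ?_
      calc -I < g₁ u + g₂ u := huS
        _ ≤ g₁ s + g₂ s := hmono hu0 hs.1
    -- Step 3 : contradiction via left approximation
    set u' := u - 1 with hu'def
    have hu'u : u' < u := by rw [hu'def]; linarith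
    have hHcap : ∀ s : ℝ, s < u → H s ≤ -I := by
      intro s hsu
      rcases lt_or_ge s 0 with h | h
      · have e1 : lsExt g₁ s = 0 := if_pos h
        have e2 : lsExt g₂ s = 0 := if_pos h
        rw [hHdef]; dsimp only; rw [e1, e2]; linarith
      · have hnotS : s ∉ S := fun hsS => absurd (csInf_le hSb hsS) (not_le.mpr hsu)
        have hsIcc : s ∈ Icc 0 t := ⟨h, hsu.le.trans hut⟩
        have : ¬ -I < g₁ s + g₂ s := fun hgt => hnotS ⟨hsIcc, hgt⟩
        rw [hHt s h]; linarith [not_lt.mp this]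
    have hcover : Ioo u' u = ⋃ n : ℕ, Ioc u' (u - 1/(n+1)) := by
      ext s
      simp only [mem_Ioo, mem_iUnion, mem_Ioc]
      constructor
      · rintro ⟨h1, h2⟩
        obtain ⟨n, hn⟩ := exists_nat_one_div_lt (show (0:ℝ) < u - s by linarith)
        exact ⟨n, h1, by push_cast at hn ⊢; linarith⟩
      · rintro ⟨n, h1, h2⟩
        have : (0:ℝ) < 1/(n+1) := by positivity
        exact ⟨h1, by linarith⟩
    have hdir : Monotone fun n : ℕ => Ioc u' (u - 1/(n+1)) := by
      intro a b hab
      refine Ioc_subset_Ioc le_rfl ?_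
      have h1 : (0:ℝ) < (a:ℝ) + 1 := by positivity
      have h2 : ((a:ℝ)+1) ≤ ((b:ℝ)+1) := by
        have := (Nat.cast_le (α := ℝ)).mpr hab; linarith
      have := one_div_le_one_div_of_le h1 h2
      linarith
    have hIoo : m (Ioo u' u) ≤ ENNReal.ofReal (-I - H u') := by
      rw [hcover, hdir.directed_le.measure_iUnion]
      refine iSup_le fun n => ?_
      rcases le_or_gt (u - 1/(n+1)) u' with h | h
      · rw [Ioc_eq_empty (not_lt.mpr h)]; simp
      · rw [hHIoc u' _ h.le]
        refine ENNReal.ofReal_le_ofReal ?_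
        have hpos : (0:ℝ) < 1/((n:ℝ)+1) := by positivity
        have hcap := hHcap (u - 1/(n+1)) (by linarith)
        linarith
    have hfinal : m (Ioc u' t) ≤ ENNReal.ofReal (-I - H u') := by
      have hsub : Ioc u' t ⊆ Ioo u' u ∪ Icc u t := by
        intro s hs
        by_cases hsu : s < u
        · exact Or.inl ⟨hs.1, hsu⟩
        · exact Or.inr ⟨not_lt.mp hsu, hs.2⟩
      calc m (Ioc u' t) ≤ m (Ioo u' u ∪ Icc u t) := measure_mono hsub
        _ ≤ m (Ioo u' u) + m (Icc u t) := measure_union_le _ _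
        _ = m (Ioo u' u) := by rw [hIcc0, add_zero]
        _ ≤ _ := hIoo
    rw [hHIoc u' t (by linarith)] at hfinal
    have hcap' : H u' ≤ -I := hHcap u' hu'u
    have : H t - H u' ≤ -I - H u' := by
      by_cases hneg : H t - H u' ≤ 0
      · linarith
      · exact (ENNReal.ofReal_le_ofReal_iff (by linarith)).mp hfinal
    have hHtt := hHt t ht
    linarith
  have hfin : g₁ t + g₂ t = -I := le_antisymm hupp hlow
  rw [hfin]
  unfold Gamma2 Gamma1
  rw [← hIdef]
  ring

end Stieltjes
section Sol

theorem drup_lscond {ι : ℝ → ℝ} (h : DRup ι) :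
    Monotone (lsExt ι) ∧ ∀ t, ContinuousWithinAt (lsExt ι) (Ici t) t :=
  lsExt_of ι h.2.1 h.2.2 (fun t ht => h.1.1 t ht)

theorem beta_lscond {β : ℝ → FiniteMeasure ℝ≥0} (hβ : DMup β) (x : ℝ≥0) :
    Monotone (lsExt (fun s => (β s (Ioi x) : ℝ))) ∧
      ∀ t, ContinuousWithinAt (lsExt (fun s => (β s (Ioi x) : ℝ))) (Ici t) t :=
  lsExt_of _ (fun t _ => fmR_nonneg _ _)
    (fun a ha _ _ hab => dmup_mono hβ ha hab measurableSet_Ioi)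
    (fun t ht => dmup_rc hβ measurableSet_Ioi ht)

theorem sol_eta {α : ℝ → FiniteMeasure ℝ≥0} {μ : ℝ → ℝ} {ξ β : ℝ → FiniteMeasure ℝ≥0}
    {ι : ℝ → ℝ} (hβ : DMup β) (hι : DRup ι) (hS : SolvesMVSP α μ ξ β ι) (x : ℝ≥0)
    {t : ℝ} (ht : 0 ≤ t) :
    (β t (Ioi x) : ℝ) + ι t = Gamma2 (fun s => (α s (Iic x) : ℝ) - μ s) t := by
  refine eta_rep _ _ _ (fun s => (ξ s (Iic x) : ℝ)) ht (beta_lscond hβ x) (drup_lscond hι)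
    (fun s _ => fmR_nonneg _ _) (fun s hs => ?_) (hS.2.1 x) (hS.2.2.1 x)
  have := hS.1 x s hs
  linarith

theorem sol_xi {α : ℝ → FiniteMeasure ℝ≥0} {μ : ℝ → ℝ} {ξ β : ℝ → FiniteMeasure ℝ≥0}
    {ι : ℝ → ℝ} (hβ : DMup β) (hι : DRup ι) (hS : SolvesMVSP α μ ξ β ι) (x : ℝ≥0)
    {t : ℝ} (ht : 0 ≤ t) :
    (ξ t (Iic x) : ℝ) = ((α t (Iic x) : ℝ) - μ t) +
      Gamma2 (fun s => (α s (Iic x) : ℝ) - μ s) t := by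
  have h1 := hS.1 x t ht
  have h2 := sol_eta hβ hι hS x ht
  linarith

theorem sol_xi_split {α : ℝ → FiniteMeasure ℝ≥0} {μ : ℝ → ℝ} {ξ β : ℝ → FiniteMeasure ℝ≥0}
    {ι : ℝ → ℝ} (hS : SolvesMVSP α μ ξ β ι) (x : ℝ≥0) {t : ℝ} (ht : 0 ≤ t) :
    (ξ t (Iic x) : ℝ) = (α t (Iic x) : ℝ) - (β t (Iic x) : ℝ) := by
  have h1 := hS.1 x t ht
  have h4 := hS.2.2.2 t ht
  have h5 := fmR_Iic_add_Ioi (β t) x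
  linarith

theorem tendsto_fmR_Iic_univ (ν : FiniteMeasure ℝ≥0) :
    Tendsto (fun n : ℕ => (ν (Iic (n : ℝ≥0)) : ℝ)) atTop (𝓝 ((ν univ : ℝ))) := by
  have hmono : Monotone (fun n : ℕ => Iic ((n : ℝ≥0))) := by
    intro a b hab
    exact Iic_subset_Iic.mpr (by exact_mod_cast hab)
  have hunion : (⋃ n : ℕ, Iic ((n : ℝ≥0))) = univ := by
    ext y
    simp only [mem_iUnion, mem_Iic, mem_univ, iff_true]
    obtain ⟨n, hn⟩ := exists_nat_ge (y : ℝ)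
    exact ⟨n, by exact_mod_cast hn⟩
  have h := tendsto_measure_iUnion_atTop (μ := (ν : Measure ℝ≥0)) (s := fun n : ℕ => Iic ((n : ℝ≥0))) hmono
  rw [hunion] at h
  have hfin : (ν : Measure ℝ≥0) univ ≠ ⊤ := measure_ne_top _ _
  have h2 := (ENNReal.tendsto_toReal hfin).comp h
  have hre : ∀ A : Set ℝ≥0, ((ν A : ℝ≥0) : ℝ) = ((ν : Measure ℝ≥0) A).toReal := by
    intro A
    rw [← FiniteMeasure.ennreal_coeFn_eq_coeFn_toMeasure, ENNReal.coe_toReal]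
  simp only [Function.comp_def] at h2
  simp only [hre]
  exact h2

theorem tendsto_fmR_Ioi_zero (ν : FiniteMeasure ℝ≥0) :
    Tendsto (fun n : ℕ => (ν (Ioi (n : ℝ≥0)) : ℝ)) atTop (𝓝 0) := by
  have h1 := tendsto_fmR_Iic_univ ν
  have h2 : ∀ n : ℕ, (ν (Ioi (n : ℝ≥0)) : ℝ) = (ν univ : ℝ) - (ν (Iic (n : ℝ≥0)) : ℝ) := by
    intro n; have := fmR_Iic_add_Ioi ν (n : ℝ≥0); linarith
  simp only [h2]
  simpa using ((tendsto_const_nhds :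
    Tendsto (fun _ : ℕ => ((ν univ : ℝ≥0) : ℝ)) atTop _).sub h1)

theorem sol_univ {α : ℝ → FiniteMeasure ℝ≥0} {μ : ℝ → ℝ} {ξ β : ℝ → FiniteMeasure ℝ≥0}
    {ι : ℝ → ℝ} (hS : SolvesMVSP α μ ξ β ι) {t : ℝ} (ht : 0 ≤ t) :
    (ξ t univ : ℝ) = (α t univ : ℝ) - (β t univ : ℝ) := by
  have h1 : Tendsto (fun n : ℕ => (ξ t (Iic (n : ℝ≥0)) : ℝ)) atTop (𝓝 ((ξ t univ : ℝ))) :=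
    tendsto_fmR_Iic_univ (ξ t)
  have h2 : Tendsto (fun n : ℕ => (α t (Iic (n : ℝ≥0)) : ℝ) - (β t (Iic (n : ℝ≥0)) : ℝ))
      atTop (𝓝 ((α t univ : ℝ) - (β t univ : ℝ))) :=
    (tendsto_fmR_Iic_univ (α t)).sub (tendsto_fmR_Iic_univ (β t))
  have heq : (fun n : ℕ => (ξ t (Iic (n : ℝ≥0)) : ℝ)) =
      fun n : ℕ => (α t (Iic (n : ℝ≥0)) : ℝ) - (β t (Iic (n : ℝ≥0)) : ℝ) := by
    funext n; exact sol_xi_split hS _ ht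
  rw [heq] at h1
  exact tendsto_nhds_unique h1 h2

theorem sol_xi_Ioi {α : ℝ → FiniteMeasure ℝ≥0} {μ : ℝ → ℝ} {ξ β : ℝ → FiniteMeasure ℝ≥0}
    {ι : ℝ → ℝ} (hS : SolvesMVSP α μ ξ β ι) (x : ℝ≥0) {t : ℝ} (ht : 0 ≤ t) :
    (ξ t (Ioi x) : ℝ) ≤ (α t (Ioi x) : ℝ) := by
  have h1 := sol_xi_split hS x ht
  have h2 := sol_univ hS ht
  have e1 := fmR_Iic_add_Ioi (ξ t) x
  have e2 := fmR_Iic_add_Ioi (α t) x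
  have e3 := fmR_Iic_add_Ioi (β t) x
  have := fmR_nonneg (β t) (Ioi x)
  linarith

theorem sol_beta_Ioi {α : ℝ → FiniteMeasure ℝ≥0} {μ : ℝ → ℝ} {ξ β : ℝ → FiniteMeasure ℝ≥0}
    {ι : ℝ → ℝ} (hS : SolvesMVSP α μ ξ β ι) (x : ℝ≥0) {t : ℝ} (ht : 0 ≤ t) :
    (β t (Ioi x) : ℝ) ≤ (α t (Ioi x) : ℝ) := by
  have h1 := sol_xi_split hS x ht
  have h2 := sol_univ hS ht
  have e1 := fmR_Iic_add_Ioi (ξ t) x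
  have e2 := fmR_Iic_add_Ioi (α t) x
  have e3 := fmR_Iic_add_Ioi (β t) x
  have := fmR_nonneg (ξ t) (Ioi x)
  linarith

end Sol
section GammaLip

theorem min0_lip {a b d : ℝ} (h : |a - b| ≤ d) : min a 0 - d ≤ min b 0 := by
  have h1 := abs_le.mp h
  rcases le_total a 0 with ha | ha <;> rcases le_total b 0 with hb | hb <;>
    simp [min_eq_left, min_eq_right, ha, hb] <;> linarith [h1.1, h1.2]

theorem gamma2_lip {ψ₁ ψ₂ : ℝ → ℝ} {t d : ℝ} (ht : 0 ≤ t)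
    (hb₁ : BddBelow ((fun s => min (ψ₁ s) 0) '' Icc 0 t))
    (hb₂ : BddBelow ((fun s => min (ψ₂ s) 0) '' Icc 0 t))
    (hd : ∀ s ∈ Icc 0 t, |ψ₁ s - ψ₂ s| ≤ d) :
    |Gamma2 ψ₁ t - Gamma2 ψ₂ t| ≤ d := by
  have hne₁ : ((fun s => min (ψ₁ s) 0) '' Icc 0 t).Nonempty :=
    ⟨_, mem_image_of_mem _ (left_mem_Icc.mpr ht)⟩
  have hne₂ : ((fun s => min (ψ₂ s) 0) '' Icc 0 t).Nonempty :=
    ⟨_, mem_image_of_mem _ (left_mem_Icc.mpr ht)⟩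
  set I₁ := sInf ((fun s => min (ψ₁ s) 0) '' Icc 0 t) with hI₁
  set I₂ := sInf ((fun s => min (ψ₂ s) 0) '' Icc 0 t) with hI₂
  have key₁ : I₁ - d ≤ I₂ := by
    refine le_csInf hne₂ ?_
    rintro y ⟨s, hs, rfl⟩
    have h1 : I₁ ≤ min (ψ₁ s) 0 := csInf_le hb₁ (mem_image_of_mem _ hs)
    have h2 := min0_lip (hd s hs)
    show I₁ - d ≤ min (ψ₂ s) 0
    linarith
  have key₂ : I₂ - d ≤ I₁ := by
    refine le_csInf hne₁ ?_
    rintro y ⟨s, hs, rfl⟩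
    have h1 : I₂ ≤ min (ψ₂ s) 0 := csInf_le hb₂ (mem_image_of_mem _ hs)
    have h2 := min0_lip (abs_sub_comm (ψ₁ s) (ψ₂ s) ▸ hd s hs)
    show I₂ - d ≤ min (ψ₁ s) 0
    linarith
  have e1 : Gamma2 ψ₁ t = -I₁ := by unfold Gamma2 Gamma1; rw [← hI₁]; ring
  have e2 : Gamma2 ψ₂ t = -I₂ := by unfold Gamma2 Gamma1; rw [← hI₂]; ring
  rw [e1, e2, abs_le]
  constructor <;> linarith

theorem gamma1_lip {ψ₁ ψ₂ : ℝ → ℝ} {t d : ℝ} (ht : 0 ≤ t)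
    (hb₁ : BddBelow ((fun s => min (ψ₁ s) 0) '' Icc 0 t))
    (hb₂ : BddBelow ((fun s => min (ψ₂ s) 0) '' Icc 0 t))
    (hd : ∀ s ∈ Icc 0 t, |ψ₁ s - ψ₂ s| ≤ d) :
    |Gamma1 ψ₁ t - Gamma1 ψ₂ t| ≤ 2 * d := by
  have h1 := gamma2_lip ht hb₁ hb₂ hd
  have h2 := hd t (right_mem_Icc.mpr ht)
  have e1 : Gamma1 ψ₁ t = ψ₁ t + Gamma2 ψ₁ t := by unfold Gamma2; ring
  have e2 : Gamma1 ψ₂ t = ψ₂ t + Gamma2 ψ₂ t := by unfold Gamma2; ring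
  rw [e1, e2]
  have := abs_add_le (ψ₁ t - ψ₂ t) (Gamma2 ψ₁ t - Gamma2 ψ₂ t)
  calc |ψ₁ t + Gamma2 ψ₁ t - (ψ₂ t + Gamma2 ψ₂ t)|
      = |(ψ₁ t - ψ₂ t) + (Gamma2 ψ₁ t - Gamma2 ψ₂ t)| := by ring_nf
    _ ≤ |ψ₁ t - ψ₂ t| + |Gamma2 ψ₁ t - Gamma2 ψ₂ t| := abs_add_le _ _
    _ ≤ 2 * d := by linarith

theorem psi_bdd {α : ℝ → FiniteMeasure ℝ≥0} {μ : ℝ → ℝ} (hμ : DRup μ) (x : ℝ≥0)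
    {t : ℝ} (ht : 0 ≤ t) :
    BddBelow ((fun s => min ((α s (Iic x) : ℝ) - μ s) 0) '' Icc 0 t) := by
  refine ⟨-(μ t), ?_⟩
  rintro y ⟨s, hs, rfl⟩
  have hμs : μ s ≤ μ t := hμ.2.2 hs.1 ht hs.2
  have hμ0 : 0 ≤ μ s := hμ.2.1 s hs.1
  have hα : (0:ℝ) ≤ (α s (Iic x) : ℝ) := fmR_nonneg _ _
  show -(μ t) ≤ min ((α s (Iic x) : ℝ) - μ s) 0
  rcases le_total ((α s (Iic x) : ℝ) - μ s) 0 with h | h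
  · rw [min_eq_left h]; linarith
  · rw [min_eq_right h]; linarith

end GammaLip
section Modulus

theorem fm_atom_interval (ν : FiniteMeasure ℝ≥0) (hatom : ∀ x : ℝ≥0, ν ({x} : Set ℝ≥0) = 0)
    (r : ℝ) {ρ : ℝ} (hρ : 0 < ρ) :
    ∃ h : ℝ, 0 < h ∧ (ν (Ioc (Real.toNNReal (r - h)) (Real.toNNReal (r + h))) : ℝ) ≤ ρ := by
  set S : ℕ → Set ℝ≥0 :=
    fun n => Ioc (Real.toNNReal (r - 1/(n+1))) (Real.toNNReal (r + 1/(n+1))) with hSdef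
  have hm : ∀ n, MeasurableSet (S n) := fun n => measurableSet_Ioc
  have hanti : Antitone S := by
    intro a b hab
    have hc : ((a:ℝ)+1) ≤ ((b:ℝ)+1) := by
      have := (Nat.cast_le (α := ℝ)).mpr hab; linarith
    have h1 : (0:ℝ) < (a:ℝ) + 1 := by positivity
    have hinv := one_div_le_one_div_of_le h1 hc
    exact Ioc_subset_Ioc (Real.toNNReal_le_toNNReal (by linarith))
      (Real.toNNReal_le_toNNReal (by linarith))
  have hinter : (⋂ n, S n) ⊆ ({Real.toNNReal r} : Set ℝ≥0) := by
    intro y hy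
    simp only [mem_iInter, hSdef, mem_Ioc] at hy
    have hypos : 0 < y := lt_of_le_of_lt zero_le (hy 0).1
    have hler : (y:ℝ) ≤ r := by
      by_contra hc
      push_neg at hc
      obtain ⟨n, hn⟩ := exists_nat_one_div_lt (show (0:ℝ) < (y:ℝ) - r by linarith)
      have := (hy n).2
      have h2 : ((Real.toNNReal (r + 1/(n+1)) : ℝ≥0) : ℝ) = max (r + 1/(n+1)) 0 :=
        Real.coe_toNNReal' _
      have h3 : (y:ℝ) ≤ max (r + 1/(n+1)) 0 := by rw [← h2]; exact_mod_cast this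
      have h4 : max (r + 1/(n+1)) 0 < (y:ℝ) :=
        max_lt (by linarith) (by exact_mod_cast hypos)
      linarith
    have hger : r ≤ (y:ℝ) := by
      by_contra hc
      push_neg at hc
      obtain ⟨n, hn⟩ := exists_nat_one_div_lt (show (0:ℝ) < r - (y:ℝ) by linarith)
      have := (hy n).1
      have h2 : ((Real.toNNReal (r - 1/(n+1)) : ℝ≥0) : ℝ) = max (r - 1/(n+1)) 0 :=
        Real.coe_toNNReal' _
      have h3 : max (r - 1/(n+1)) 0 < (y:ℝ) := by
        rw [← h2]; exact_mod_cast this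
      have h4 : (y:ℝ) ≤ max (r - 1/(n+1)) 0 := le_max_of_le_left (by linarith)
      linarith
    have : (y:ℝ) = r := le_antisymm hler hger
    simp only [mem_singleton_iff]
    have : ((Real.toNNReal r : ℝ≥0) : ℝ) = (y:ℝ) := by
      rw [Real.coe_toNNReal' r, ← this]
      exact max_eq_left y.coe_nonneg
    exact_mod_cast this.symm
  have hsing : (ν : Measure ℝ≥0) {Real.toNNReal r} = 0 := by
    have := hatom (Real.toNNReal r)
    rw [← FiniteMeasure.ennreal_coeFn_eq_coeFn_toMeasure]
    exact_mod_cast this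
  have hnull : (ν : Measure ℝ≥0) (⋂ n, S n) = 0 := measure_mono_null hinter hsing
  have htend : Tendsto (fun n => (ν : Measure ℝ≥0) (S n)) atTop (𝓝 0) := by
    have := tendsto_measure_iInter_atTop (μ := (ν : Measure ℝ≥0))
      (fun n => (hm n).nullMeasurableSet) hanti ⟨0, measure_ne_top _ _⟩
    rwa [hnull] at this
  have hev : ∀ᶠ n in atTop, (ν : Measure ℝ≥0) (S n) < ENNReal.ofReal ρ := by
    exact htend.eventually_lt_const (by simp [hρ])
  obtain ⟨n, hn⟩ := hev.exists
  refine ⟨1/(n+1), by positivity, ?_⟩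
  have : ((ν (S n) : ℝ≥0) : ℝ) ≤ ρ := by
    have h2 : (ν (S n) : ℝ≥0∞) < ENNReal.ofReal ρ := by
      rw [FiniteMeasure.ennreal_coeFn_eq_coeFn_toMeasure]; exact hn
    have h3 := ENNReal.toReal_mono ENNReal.ofReal_ne_top h2.le
    rwa [ENNReal.coe_toReal, ENNReal.toReal_ofReal hρ.le] at h3
  exact this

theorem fm_modulus (ν : FiniteMeasure ℝ≥0) (hatom : ∀ x : ℝ≥0, ν ({x} : Set ℝ≥0) = 0)
    {ρ : ℝ} (hρ : 0 < ρ) :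
    ∃ δ : ℝ, 0 < δ ∧ ∀ a b : ℝ≥0, a ≤ b → (b:ℝ) ≤ (a:ℝ) + δ →
      (ν (Iic b) : ℝ) ≤ (ν (Iic a) : ℝ) + ρ := by
  -- tail
  have htail := tendsto_fmR_Ioi_zero ν
  have hev : ∀ᶠ n : ℕ in atTop, (ν (Ioi (n:ℝ≥0)) : ℝ) < ρ :=
    htail.eventually_lt_const hρ
  obtain ⟨X, hX⟩ := hev.exists
  -- pointwise moduli and cover of [0, X+1]
  have hchoice : ∀ r : ℝ, ∃ h : ℝ, 0 < h ∧
      (ν (Ioc (Real.toNNReal (r - h)) (Real.toNNReal (r + h))) : ℝ) ≤ ρ :=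
    fun r => fm_atom_interval ν hatom r hρ
  choose hfun hpos hbound using hchoice
  have hcompact : IsCompact (Icc (0:ℝ) (X+1)) := isCompact_Icc
  have hcover : Icc (0:ℝ) (X+1) ⊆ ⋃ r : ℝ, Ioo (r - hfun r / 2) (r + hfun r / 2) := by
    intro a _
    exact mem_iUnion.mpr ⟨a, by constructor <;> simp <;> linarith [hpos a]⟩
  obtain ⟨F, hF⟩ := hcompact.elim_finite_subcover
    (fun r : ℝ => Ioo (r - hfun r / 2) (r + hfun r / 2)) (fun r => isOpen_Ioo) hcover
  by_cases hFne : F.Nonempty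
  case neg =>
    -- impossible since Icc nonempty, but handle: cover of nonempty set by empty union
    exfalso
    have h0 : (0:ℝ) ∈ Icc (0:ℝ) (X+1) := ⟨le_rfl, by positivity⟩
    have := hF h0
    simp only [Finset.not_nonempty_iff_eq_empty.mp hFne] at this
    simpa using this
  case pos =>
  set δ : ℝ := (F.image (fun r => hfun r / 2)).min' (by simpa using hFne) with hδdef
  have hδpos : 0 < δ := by
    have : ∀ y ∈ F.image (fun r => hfun r / 2), 0 < y := by
      intro y hy
      obtain ⟨r, _, rfl⟩ := Finset.mem_image.mp hy
      linarith [hpos r]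
    exact this _ (Finset.min'_mem _ _)
  refine ⟨δ, hδpos, ?_⟩
  intro a b hab hba
  rcases le_or_gt ((a:ℝ)) (X) with hax | hax
  · -- a in compact region: use cover
    have haIcc : (a:ℝ) ∈ Icc (0:ℝ) (X+1) := ⟨a.coe_nonneg, by linarith⟩
    obtain ⟨r, hrF, hra⟩ := mem_iUnion₂.mp (hF haIcc)
    have hδr : δ ≤ hfun r / 2 :=
      Finset.min'_le _ _ (Finset.mem_image.mpr ⟨r, hrF, rfl⟩)
    have hsub : Ioc a b ⊆ Ioc (Real.toNNReal (r - hfun r)) (Real.toNNReal (r + hfun r)) := by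
      intro y hy
      constructor
      · have h1 : ((Real.toNNReal (r - hfun r) : ℝ≥0) : ℝ) = max (r - hfun r) 0 :=
          Real.coe_toNNReal' _
        have h2 : max (r - hfun r) 0 < (y:ℝ) := by
          apply max_lt
          · have := hra.1
            have := hpos r
            have : r - hfun r < (a:ℝ) := by linarith [hra.1]
            calc r - hfun r < (a:ℝ) := this
              _ < (y:ℝ) := by exact_mod_cast hy.1
          · calc (0:ℝ) ≤ (a:ℝ) := a.coe_nonneg
              _ < (y:ℝ) := by exact_mod_cast hy.1
        have : (Real.toNNReal (r - hfun r) : ℝ) < (y : ℝ) := by rw [h1]; exact h2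
        exact_mod_cast this
      · have h3 : (y:ℝ) ≤ r + hfun r := by
          have hy2 : (y:ℝ) ≤ (b:ℝ) := by exact_mod_cast hy.2
          have := hra.2
          linarith [hra.2]
        refine (Real.le_toNNReal_iff_coe_le ?_).mpr h3
        have := hra.2; have := hpos r
        linarith [a.coe_nonneg]
    have hIoc : (ν (Ioc a b) : ℝ) ≤ ρ := (fmR_mono ν hsub).trans (hbound r)
    have := fmR_Iic_add_Ioc ν hab
    linarith
  · -- tail region
    have hsub : Ioc a b ⊆ Ioi ((X:ℝ≥0)) := by
      intro y hy
      have h1 : ((X:ℕ):ℝ) < (a:ℝ) := hax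
      have h2 : (a:ℝ) < (y:ℝ) := by exact_mod_cast hy.1
      have : ((X:ℝ≥0):ℝ) < (y:ℝ) := by push_cast; push_cast at h1; linarith
      exact_mod_cast this
    have hIoc : (ν (Ioc a b) : ℝ) ≤ ρ := (fmR_mono ν hsub).trans hX.le
    have := fmR_Iic_add_Ioc ν hab
    linarith

end Modulus
section LPtoCDF

theorem enn_to_real_le {m m' : FiniteMeasure ℝ≥0} {A B : Set ℝ≥0} {δ : ℝ} (hδ : 0 ≤ δ)
    (h : (m : Measure ℝ≥0) A ≤ (m' : Measure ℝ≥0) B + ENNReal.ofReal δ) :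
    (m A : ℝ) ≤ (m' B : ℝ) + δ := by
  rw [← FiniteMeasure.ennreal_coeFn_eq_coeFn_toMeasure,
    ← FiniteMeasure.ennreal_coeFn_eq_coeFn_toMeasure] at h
  have hfin : ((m' B : ℝ≥0∞) + ENNReal.ofReal δ) ≠ ⊤ := by
    exact ENNReal.add_ne_top.mpr ⟨ENNReal.coe_ne_top, ENNReal.ofReal_ne_top⟩
  have h2 := ENNReal.toReal_mono hfin h
  rwa [ENNReal.toReal_add ENNReal.coe_ne_top ENNReal.ofReal_ne_top, ENNReal.coe_toReal,
    ENNReal.coe_toReal, ENNReal.toReal_ofReal hδ] at h2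

theorem thick_Iic (δ : ℝ) (x : ℝ≥0) :
    Metric.thickening δ (Iic x) ⊆ Iic (x + Real.toNNReal δ) := by
  intro y hy
  obtain ⟨z, hz, hd⟩ := Metric.mem_thickening_iff.mp hy
  rw [NNReal.dist_eq] at hd
  have h1 : (y:ℝ) ≤ (x:ℝ) + δ := by
    have := abs_lt.mp hd
    have hzx : (z:ℝ) ≤ (x:ℝ) := by exact_mod_cast hz
    linarith [this.2]
  have h2 : ((x + Real.toNNReal δ : ℝ≥0) : ℝ) = (x:ℝ) + max δ 0 := by
    push_cast [Real.coe_toNNReal']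
    ring
  have : (y:ℝ) ≤ ((x + Real.toNNReal δ : ℝ≥0) : ℝ) := by
    rw [h2]
    calc (y:ℝ) ≤ (x:ℝ) + δ := h1
      _ ≤ (x:ℝ) + max δ 0 := by gcongr; exact le_max_left _ _
  exact_mod_cast this

theorem lp_cdf_bounds {m m' : FiniteMeasure ℝ≥0} {δ ω : ℝ} (hδ : 0 < δ) (hω : 0 ≤ ω)
    (hLP : levyProkhorovDist (m : Measure ℝ≥0) (m' : Measure ℝ≥0) < δ)
    (hmod : ∀ a b : ℝ≥0, a ≤ b → (b:ℝ) ≤ (a:ℝ) + δ →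
      (m' (Iic b) : ℝ) ≤ (m' (Iic a) : ℝ) + ω)
    (hzero : (m' (Iic (Real.toNNReal δ)) : ℝ) ≤ ω) :
    (∀ x : ℝ≥0, |(m (Iic x) : ℝ) - (m' (Iic x) : ℝ)| ≤ ω + 2*δ) ∧
      |(m univ : ℝ) - (m' univ : ℝ)| ≤ δ := by
  have hne := levyProkhorovEDist_ne_top (m : Measure ℝ≥0) (m' : Measure ℝ≥0)
  have hlt : levyProkhorovEDist (m : Measure ℝ≥0) (m' : Measure ℝ≥0) < ENNReal.ofReal δ := by
    rw [ENNReal.lt_ofReal_iff_toReal_lt hne]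
    exact hLP
  have htr : (ENNReal.ofReal δ).toReal = δ := ENNReal.toReal_ofReal hδ.le
  have dir1 : ∀ x : ℝ≥0, (m (Iic x) : ℝ) ≤ (m' (Iic x) : ℝ) + ω + δ := by
    intro x
    have h := left_measure_le_of_levyProkhorovEDist_lt hlt (B := Iic x) measurableSet_Iic
    rw [htr] at h
    have h2 : (m : Measure ℝ≥0) (Iic x) ≤
        (m' : Measure ℝ≥0) (Iic (x + Real.toNNReal δ)) + ENNReal.ofReal δ :=
      h.trans (add_le_add_left (measure_mono (thick_Iic δ x)) _)
    have h3 := enn_to_real_le hδ.le h2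
    have h4 : (m' (Iic (x + Real.toNNReal δ)) : ℝ) ≤ (m' (Iic x) : ℝ) + ω := by
      refine hmod x _ le_self_add ?_
      have : ((x + Real.toNNReal δ : ℝ≥0) : ℝ) = (x:ℝ) + max δ 0 := by
        push_cast [Real.coe_toNNReal']; ring
      rw [this, max_eq_left hδ.le]
    linarith
  have dir2 : ∀ x : ℝ≥0, (m' (Iic x) : ℝ) ≤ (m (Iic x) : ℝ) + ω + δ := by
    intro x
    rcases le_or_gt x (Real.toNNReal δ) with hc | hc
    · have h1 : (m' (Iic x) : ℝ) ≤ (m' (Iic (Real.toNNReal δ)) : ℝ) :=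
        fmR_mono m' (Iic_subset_Iic.mpr hc)
      have := fmR_nonneg m (Iic x)
      linarith
    · set a := x - Real.toNNReal δ with hadef
      have hle : Real.toNNReal δ ≤ x := hc.le
      have hax : a + Real.toNNReal δ = x := tsub_add_cancel_of_le hle
      have h := right_measure_le_of_levyProkhorovEDist_lt hlt (B := Iic a) measurableSet_Iic
      rw [htr] at h
      have h2 : (m' : Measure ℝ≥0) (Iic a) ≤
          (m : Measure ℝ≥0) (Iic x) + ENNReal.ofReal δ := by
        refine h.trans (add_le_add_left ?_ _)
        have := thick_Iic δ a
        rw [hax] at this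
        exact measure_mono this
      have h3 := enn_to_real_le hδ.le h2
      have h4 : (m' (Iic x) : ℝ) ≤ (m' (Iic a) : ℝ) + ω := by
        refine hmod a x ?_ ?_
        · exact tsub_le_self.trans le_rfl
        · have : ((x : ℝ≥0) : ℝ) = (a:ℝ) + ((Real.toNNReal δ : ℝ≥0) : ℝ) := by
            rw [← hax]; push_cast; ring
          rw [this, Real.coe_toNNReal δ hδ.le]
      linarith
  constructor
  · intro x
    have h1 := dir1 x; have h2 := dir2 x
    rw [abs_le]
    constructor <;> linarith
  · have h1 := left_measure_le_of_levyProkhorovEDist_lt hlt (B := (univ : Set ℝ≥0))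
      MeasurableSet.univ
    have h2 := right_measure_le_of_levyProkhorovEDist_lt hlt (B := (univ : Set ℝ≥0))
      MeasurableSet.univ
    rw [htr] at h1 h2
    have h1' : (m : Measure ℝ≥0) univ ≤ (m' : Measure ℝ≥0) univ + ENNReal.ofReal δ :=
      h1.trans (add_le_add_left (measure_mono (subset_univ _)) _)
    have h2' : (m' : Measure ℝ≥0) univ ≤ (m : Measure ℝ≥0) univ + ENNReal.ofReal δ :=
      h2.trans (add_le_add_left (measure_mono (subset_univ _)) _)
    have h3 := enn_to_real_le hδ.le h1'
    have h4 := enn_to_real_le hδ.le h2'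
    rw [abs_le]
    constructor <;> linarith

end LPtoCDF
section CDFtoLP

theorem fmR_toReal (ν : FiniteMeasure ℝ≥0) (A : Set ℝ≥0) :
    ((ν A : ℝ≥0) : ℝ) = ((ν : Measure ℝ≥0) A).toReal := by
  rw [← FiniteMeasure.ennreal_coeFn_eq_coeFn_toMeasure, ENNReal.coe_toReal]

theorem fmR_union_le (ν : FiniteMeasure ℝ≥0) (A B : Set ℝ≥0) :
    (ν (A ∪ B) : ℝ) ≤ (ν A : ℝ) + (ν B : ℝ) := by
  rw [fmR_toReal, fmR_toReal, fmR_toReal]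
  rw [← ENNReal.toReal_add (measure_ne_top _ _) (measure_ne_top _ _)]
  exact ENNReal.toReal_mono
    (ENNReal.add_ne_top.mpr ⟨measure_ne_top _ _, measure_ne_top _ _⟩) (measure_union_le A B)

theorem fmR_biUnion_le (ν : FiniteMeasure ℝ≥0) (J : Finset ℕ) (C : ℕ → Set ℝ≥0) :
    (ν (⋃ i ∈ J, C i) : ℝ) ≤ ∑ i ∈ J, (ν (C i) : ℝ) := by
  rw [fmR_toReal]
  have h1 : (ν : Measure ℝ≥0) (⋃ i ∈ J, C i) ≤ ∑ i ∈ J, (ν : Measure ℝ≥0) (C i) :=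
    measure_biUnion_finset_le J C
  have h2 := ENNReal.toReal_mono (a := (ν : Measure ℝ≥0) (⋃ i ∈ J, C i))
    (by exact (ENNReal.sum_lt_top.mpr (fun i _ => measure_lt_top _ _)).ne) h1
  refine h2.trans ?_
  rw [ENNReal.toReal_sum (fun i _ => measure_ne_top _ _)]
  exact le_of_eq (Finset.sum_congr rfl (fun i _ => by rw [fmR_toReal]))

theorem fmR_biUnion_eq (ν : FiniteMeasure ℝ≥0) (J : Finset ℕ) (C : ℕ → Set ℝ≥0)
    (hd : (J : Set ℕ).PairwiseDisjoint C) (hm : ∀ i ∈ J, MeasurableSet (C i)) :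
    (ν (⋃ i ∈ J, C i) : ℝ) = ∑ i ∈ J, (ν (C i) : ℝ) := by
  rw [fmR_toReal, measure_biUnion_finset hd hm,
    ENNReal.toReal_sum (fun i _ => measure_ne_top _ _)]
  exact Finset.sum_congr rfl (fun i _ => by rw [fmR_toReal])

theorem real_to_enn_le {m m' : FiniteMeasure ℝ≥0} {A B : Set ℝ≥0} {e : ℝ} (he : 0 ≤ e)
    (h : (m A : ℝ) ≤ (m' B : ℝ) + e) :
    (m : Measure ℝ≥0) A ≤ (m' : Measure ℝ≥0) B + ENNReal.ofReal e := by
  rw [← FiniteMeasure.ennreal_coeFn_eq_coeFn_toMeasure,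
    ← FiniteMeasure.ennreal_coeFn_eq_coeFn_toMeasure]
  calc (m A : ℝ≥0∞) = ENNReal.ofReal ((m A : ℝ≥0) : ℝ) := by
        rw [ENNReal.ofReal_coe_nnreal]
    _ ≤ ENNReal.ofReal (((m' B : ℝ≥0) : ℝ) + e) := ENNReal.ofReal_le_ofReal h
    _ = ENNReal.ofReal ((m' B : ℝ≥0) : ℝ) + ENNReal.ofReal e :=
        ENNReal.ofReal_add (m' B).coe_nonneg he
    _ = (m' B : ℝ≥0∞) + ENNReal.ofReal e := by rw [ENNReal.ofReal_coe_nnreal]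

theorem lp_of_cdf (m m' : FiniteMeasure ℝ≥0) {δ ε τ : ℝ} (N : ℕ)
    (hδ : 0 < δ) (hε : 0 ≤ ε) (hτ : 0 ≤ τ)
    (h1 : ∀ x : ℝ≥0, |(m (Iic x) : ℝ) - (m' (Iic x) : ℝ)| ≤ ε)
    (h2 : |(m univ : ℝ) - (m' univ : ℝ)| ≤ ε)
    (h3 : (m' (Ioi (Real.toNNReal (N * δ))) : ℝ) ≤ τ) :
    levyProkhorovDist (m : Measure ℝ≥0) (m' : Measure ℝ≥0)
      ≤ 2*δ + (2*N+4)*ε + 2*τ := by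
  classical
  set p : ℕ → ℝ≥0 := fun i => Real.toNNReal (i * δ) with hpdef
  have hpcoe : ∀ i : ℕ, ((p i : ℝ≥0) : ℝ) = i * δ := by
    intro i
    rw [hpdef]
    exact Real.coe_toNNReal _ (by positivity)
  have hpmono : Monotone p := by
    intro a b hab
    apply Real.toNNReal_le_toNNReal
    have : (a:ℝ) ≤ (b:ℝ) := by exact_mod_cast hab
    nlinarith
  set X : ℝ≥0 := p N with hXdef
  set C : ℕ → Set ℝ≥0 :=
    fun i => Nat.casesOn i (Iic 0) (fun j => Ioc (p j) (p (j+1))) with hCdef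
  have hC0 : C 0 = Iic (0:ℝ≥0) := rfl
  have hCs : ∀ j : ℕ, C (j+1) = Ioc (p j) (p (j+1)) := fun j => rfl
  have hCm : ∀ i, MeasurableSet (C i) := by
    intro i
    rcases i with _ | j
    · rw [hC0]; exact measurableSet_Iic
    · rw [hCs]; exact measurableSet_Ioc
  have hp0 : p 0 = 0 := by
    have h := hpcoe 0
    simp only [Nat.cast_zero, zero_mul] at h
    exact_mod_cast h
  have hCsub : ∀ i, C i ⊆ Iic (p i) := by
    intro i
    rcases i with _ | j
    · rw [hC0, hp0]
    · rw [hCs]; exact Ioc_subset_Iic_self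
  have hCdisj : (↑(Finset.range (N+1)) : Set ℕ).PairwiseDisjoint C := by
    have key : ∀ i j : ℕ, i < j → Disjoint (C i) (C j) := by
      intro i j hij
      rcases j with _ | k
      · omega
      · refine Set.disjoint_left.mpr (fun y hyi hyj => ?_)
        have h1 : y ≤ p i := hCsub i hyi
        rw [hCs] at hyj
        have h2 : p k < y := hyj.1
        have h3 : p i ≤ p k := hpmono (by omega)
        exact absurd (h1.trans h3) (not_le.mpr h2)
    intro i _ j _ hij
    rcases lt_or_gt_of_ne hij with h | h
    · exact key i j h
    · exact (key j i h).symm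
  have hCdiam : ∀ i, ∀ y ∈ C i, ∀ b ∈ C i, dist y b ≤ δ := by
    intro i y hy b hb
    rw [NNReal.dist_eq, abs_le]
    rcases i with _ | j
    · rw [hC0] at hy hb
      simp only [mem_Iic, le_zero_iff] at hy hb
      rw [hy, hb]
      constructor <;> simp <;> linarith
    · rw [hCs] at hy hb
      have e1 := hpcoe j
      have e2 := hpcoe (j+1)
      have hy1 : ((p j : ℝ≥0) : ℝ) < (y:ℝ) := by exact_mod_cast hy.1
      have hy2 : (y:ℝ) ≤ ((p (j+1) : ℝ≥0) : ℝ) := by exact_mod_cast hy.2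
      have hb1 : ((p j : ℝ≥0) : ℝ) < (b:ℝ) := by exact_mod_cast hb.1
      have hb2 : (b:ℝ) ≤ ((p (j+1) : ℝ≥0) : ℝ) := by exact_mod_cast hb.2
      rw [e1] at hy1 hb1
      rw [e2] at hy2 hb2
      push_cast at hy2 hb2
      constructor <;> nlinarith
  have hcover : ∀ n : ℕ, ∀ y : ℝ≥0, y ≤ p n → ∃ i, i ≤ n ∧ y ∈ C i := by
    intro n
    induction n with
    | zero =>
      intro y hy
      refine ⟨0, le_rfl, ?_⟩
      rw [hC0]
      rwa [hp0] at hy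
    | succ n ih =>
      intro y hy
      rcases le_or_gt y (p n) with h | h
      · obtain ⟨i, hi, hmem⟩ := ih y h
        exact ⟨i, hi.trans (Nat.le_succ n), hmem⟩
      · refine ⟨n+1, le_rfl, ?_⟩
        rw [hCs]
        exact ⟨h, hy⟩
  have hcell : ∀ i, |(m (C i) : ℝ) - (m' (C i) : ℝ)| ≤ 2*ε := by
    intro i
    rcases i with _ | j
    · rw [hC0]
      have h := abs_le.mp (h1 0)
      rw [abs_le]
      constructor <;> linarith [h.1, h.2]
    · rw [hCs]
      have hple : p j ≤ p (j+1) := hpmono (Nat.le_succ j)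
      have em := fmR_Iic_add_Ioc m hple
      have em' := fmR_Iic_add_Ioc m' hple
      have ha := abs_le.mp (h1 (p (j+1)))
      have hb := abs_le.mp (h1 (p j))
      rw [abs_le]
      constructor <;> linarith [ha.1, ha.2, hb.1, hb.2]
  have htail_m : (m (Ioi X) : ℝ) ≤ τ + 2*ε := by
    have e1 := fmR_Iic_add_Ioi m X
    have e2 := fmR_Iic_add_Ioi m' X
    have ha := abs_le.mp (h1 X)
    have hb := abs_le.mp h2
    have h3' : (m' (Ioi X) : ℝ) ≤ τ := h3
    linarith [ha.1, ha.2, hb.1, hb.2]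
  have htail_m' : (m' (Ioi X) : ℝ) ≤ τ := h3
  set e0 : ℝ := 2*δ + (2*N+4)*ε + 2*τ with he0def
  have he0nn : 0 ≤ e0 := by positivity
  have hδe0 : δ < e0 := by nlinarith
  have core : ∀ B : Set ℝ≥0,
      ((m B : ℝ) ≤ (m' (Metric.thickening e0 B) : ℝ) + e0) ∧
      ((m' B : ℝ) ≤ (m (Metric.thickening e0 B) : ℝ) + e0) := by
    intro B
    set J : Finset ℕ := (Finset.range (N+1)).filter (fun i => (C i ∩ B).Nonempty) with hJdef
    set U : Set ℝ≥0 := ⋃ i ∈ J, C i with hUdef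
    have hJd : (↑J : Set ℕ).PairwiseDisjoint C :=
      hCdisj.subset (Finset.coe_subset.mpr (Finset.filter_subset _ _))
    have hBU : B ∩ Iic X ⊆ U := by
      rintro y ⟨hyB, hyX⟩
      obtain ⟨i, hiN, hyC⟩ := hcover N y hyX
      have hiJ : i ∈ J := by
        rw [hJdef, Finset.mem_filter]
        exact ⟨Finset.mem_range.mpr (Nat.lt_succ_of_le hiN), ⟨y, hyC, hyB⟩⟩
      exact mem_biUnion hiJ hyC
    have hUth : U ⊆ Metric.thickening e0 B := by
      intro y hy
      obtain ⟨i, hiJ, hyC⟩ := mem_iUnion₂.mp hy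
      have hiJ' := Finset.mem_filter.mp hiJ
      obtain ⟨b, hbC, hbB⟩ := hiJ'.2
      exact Metric.mem_thickening_iff.mpr ⟨b, hbB, lt_of_le_of_lt (hCdiam i y hyC b hbC) hδe0⟩
    have hcard : (J.card : ℝ) ≤ N + 1 := by
      have hc := Finset.card_filter_le (Finset.range (N+1)) (fun i => (C i ∩ B).Nonempty)
      rw [Finset.card_range] at hc
      exact_mod_cast hc
    have hUm : (m U : ℝ) = ∑ i ∈ J, (m (C i) : ℝ) :=
      fmR_biUnion_eq m J C hJd (fun i _ => hCm i)
    have hUm' : (m' U : ℝ) = ∑ i ∈ J, (m' (C i) : ℝ) :=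
      fmR_biUnion_eq m' J C hJd (fun i _ => hCm i)
    have hsum : ∑ i ∈ J, (m (C i) : ℝ) ≤ ∑ i ∈ J, (m' (C i) : ℝ) + 2*ε*(N+1) := by
      calc ∑ i ∈ J, (m (C i) : ℝ) ≤ ∑ i ∈ J, ((m' (C i) : ℝ) + 2*ε) := by
            refine Finset.sum_le_sum (fun i _ => ?_)
            linarith [(abs_le.mp (hcell i)).2]
        _ = ∑ i ∈ J, (m' (C i) : ℝ) + 2*ε*J.card := by
            rw [Finset.sum_add_distrib, Finset.sum_const, nsmul_eq_mul]; ring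
        _ ≤ ∑ i ∈ J, (m' (C i) : ℝ) + 2*ε*(N+1) := by
            have : 2*ε*(J.card : ℝ) ≤ 2*ε*(N+1) :=
              mul_le_mul_of_nonneg_left hcard (by linarith)
            linarith
    have hsum' : ∑ i ∈ J, (m' (C i) : ℝ) ≤ ∑ i ∈ J, (m (C i) : ℝ) + 2*ε*(N+1) := by
      calc ∑ i ∈ J, (m' (C i) : ℝ) ≤ ∑ i ∈ J, ((m (C i) : ℝ) + 2*ε) := by
            refine Finset.sum_le_sum (fun i _ => ?_)
            linarith [(abs_le.mp (hcell i)).1]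
        _ = ∑ i ∈ J, (m (C i) : ℝ) + 2*ε*J.card := by
            rw [Finset.sum_add_distrib, Finset.sum_const, nsmul_eq_mul]; ring
        _ ≤ ∑ i ∈ J, (m (C i) : ℝ) + 2*ε*(N+1) := by
            have : 2*ε*(J.card : ℝ) ≤ 2*ε*(N+1) :=
              mul_le_mul_of_nonneg_left hcard (by linarith)
            linarith
    have hmUth : (m' U : ℝ) ≤ (m' (Metric.thickening e0 B) : ℝ) := fmR_mono m' hUth
    have hmUth' : (m U : ℝ) ≤ (m (Metric.thickening e0 B) : ℝ) := fmR_mono m hUth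
    have hsplitB : ∀ ν : FiniteMeasure ℝ≥0,
        (ν B : ℝ) ≤ (ν (B ∩ Iic X) : ℝ) + (ν (Ioi X) : ℝ) := by
      intro ν
      have hBsub : B ⊆ (B ∩ Iic X) ∪ Ioi X := by
        intro y hy
        rcases le_or_gt y X with h | h
        · exact Or.inl ⟨hy, h⟩
        · exact Or.inr h
      exact (fmR_mono ν hBsub).trans (fmR_union_le ν _ _)
    constructor
    · have c1 := hsplitB m
      have c2 : (m (B ∩ Iic X) : ℝ) ≤ (m U : ℝ) := fmR_mono m hBU
      have c3 : (m U : ℝ) ≤ (m' (Metric.thickening e0 B) : ℝ) + 2*ε*(N+1) := by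
        rw [hUm]
        calc ∑ i ∈ J, (m (C i) : ℝ) ≤ ∑ i ∈ J, (m' (C i) : ℝ) + 2*ε*(N+1) := hsum
          _ = (m' U : ℝ) + 2*ε*(N+1) := by rw [hUm']
          _ ≤ _ := by linarith
      have := htail_m
      nlinarith
    · have c1 := hsplitB m'
      have c2 : (m' (B ∩ Iic X) : ℝ) ≤ (m' U : ℝ) := fmR_mono m' hBU
      have c3 : (m' U : ℝ) ≤ (m (Metric.thickening e0 B) : ℝ) + 2*ε*(N+1) := by
        rw [hUm']
        calc ∑ i ∈ J, (m' (C i) : ℝ) ≤ ∑ i ∈ J, (m (C i) : ℝ) + 2*ε*(N+1) := hsum'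
          _ = (m U : ℝ) + 2*ε*(N+1) := by rw [hUm]
          _ ≤ _ := by linarith
      nlinarith [htail_m']
  have hedist : levyProkhorovEDist (m : Measure ℝ≥0) (m' : Measure ℝ≥0)
      ≤ ENNReal.ofReal e0 := by
    refine levyProkhorovEDist_le_of_forall _ _ (ENNReal.ofReal e0) (fun ε' B hε' hfin _ => ?_)
    have hto : e0 ≤ ε'.toReal :=
      ((ENNReal.ofReal_lt_iff_lt_toReal he0nn hfin.ne).mp hε').le
    have hth : Metric.thickening e0 B ⊆ Metric.thickening ε'.toReal B :=
      Metric.thickening_mono hto B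
    have hc := core B
    have hl : (m : Measure ℝ≥0) B ≤ (m' : Measure ℝ≥0) (Metric.thickening e0 B) +
        ENNReal.ofReal e0 := real_to_enn_le he0nn hc.1
    have hr : (m' : Measure ℝ≥0) B ≤ (m : Measure ℝ≥0) (Metric.thickening e0 B) +
        ENNReal.ofReal e0 := real_to_enn_le he0nn hc.2
    constructor
    · exact hl.trans (add_le_add (measure_mono hth) hε'.le)
    · exact hr.trans (add_le_add (measure_mono hth) hε'.le)
  have hfin := ENNReal.toReal_mono ENNReal.ofReal_ne_top hedist
  rw [ENNReal.toReal_ofReal he0nn] at hfin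
  exact hfin

end CDFtoLP
section Assembly

theorem lp_dist_le_mass (m m' : FiniteMeasure ℝ≥0) :
    levyProkhorovDist (m : Measure ℝ≥0) (m' : Measure ℝ≥0)
      ≤ max ((m univ : ℝ)) ((m' univ : ℝ)) := by
  have h := levyProkhorovEDist_le_max_measure_univ (m : Measure ℝ≥0) (m' : Measure ℝ≥0)
  have hne : max ((m : Measure ℝ≥0) univ) ((m' : Measure ℝ≥0) univ) ≠ ⊤ :=
    (max_lt (measure_lt_top _ _) (measure_lt_top _ _)).ne
  have h2 := ENNReal.toReal_mono hne h
  refine h2.trans (le_of_eq ?_)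
  rw [ENNReal.toReal_max (measure_ne_top _ _) (measure_ne_top _ _), fmR_toReal, fmR_toReal]

end Assembly
/-- Continuity of the measure-valued Skorokhod map: if `(α^k,μ^k)` converges to
`(α,μ)` uniformly on compacts (in the Lévy–Prokhorov metric for the measure
component), where `α` is continuous with atomless values and `μ` is continuous,
then the corresponding solutions of the MVSP converge uniformly on compacts. -/
theorem mvsp_continuity_of_map
    (αk : ℕ → ℝ → FiniteMeasure ℝ≥0) (μk : ℕ → ℝ → ℝ)
    (α : ℝ → FiniteMeasure ℝ≥0) (μ : ℝ → ℝ)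
    (hαk : ∀ k, DMup (αk k)) (hμk : ∀ k, DRup (μk k))
    (hα : DMup α) (hμ : DRup μ)
    (hαcont : ContinuousOn α (Set.Ici 0))
    (hαatomless : ∀ t : ℝ, 0 ≤ t → ∀ x : ℝ≥0, α t ({x} : Set ℝ≥0) = 0)
    (hμcont : ContinuousOn μ (Set.Ici 0))
    (hconvα : ∀ T : ℝ, 0 < T →
      Filter.Tendsto
        (fun k => sSup ((fun t =>
          levyProkhorovDist (αk k t : Measure ℝ≥0) (α t : Measure ℝ≥0)) '' Set.Icc 0 T))
        Filter.atTop (nhds 0))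
    (hconvμ : ∀ T : ℝ, 0 < T →
      Filter.Tendsto
        (fun k => sSup ((fun t => |μk k t - μ t|) '' Set.Icc 0 T))
        Filter.atTop (nhds 0))
    (ξk βk : ℕ → ℝ → FiniteMeasure ℝ≥0) (ιk : ℕ → ℝ → ℝ)
    (hsolk : ∀ k, DM (ξk k) ∧ DMup (βk k) ∧ DRup (ιk k) ∧
      SolvesMVSP (αk k) (μk k) (ξk k) (βk k) (ιk k))
    (ξ β : ℝ → FiniteMeasure ℝ≥0) (ι : ℝ → ℝ)
    (hsol : DM ξ ∧ DMup β ∧ DRup ι ∧ SolvesMVSP α μ ξ β ι) :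
    ∀ T : ℝ, 0 < T →
      (Filter.Tendsto
        (fun k => sSup ((fun t =>
          levyProkhorovDist (ξk k t : Measure ℝ≥0) (ξ t : Measure ℝ≥0)) '' Set.Icc 0 T))
        Filter.atTop (nhds 0)) ∧
      (Filter.Tendsto
        (fun k => sSup ((fun t =>
          levyProkhorovDist (βk k t : Measure ℝ≥0) (β t : Measure ℝ≥0)) '' Set.Icc 0 T))
        Filter.atTop (nhds 0)) ∧
      (Filter.Tendsto
        (fun k => sSup ((fun t => |ιk k t - ι t|) '' Set.Icc 0 T))
        Filter.atTop (nhds 0)) := by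
  intro T hT
  obtain ⟨hDMξ, hDMβ, hDRι, hS⟩ := hsol
  have hT0 : (0:ℝ) ≤ T := hT.le
  have h0mem : (0:ℝ) ∈ Icc (0:ℝ) T := ⟨le_rfl, hT0⟩
  have hbddLP : ∀ k, BddAbove ((fun t =>
      levyProkhorovDist (αk k t : Measure ℝ≥0) (α t : Measure ℝ≥0)) '' Icc 0 T) := by
    intro k
    refine ⟨max ((αk k T univ : ℝ)) ((α T univ : ℝ)), ?_⟩
    rintro y ⟨t, ht, rfl⟩
    refine (lp_dist_le_mass _ _).trans (max_le_max ?_ ?_)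
    · exact dmup_mono (hαk k) ht.1 ht.2 MeasurableSet.univ
    · exact dmup_mono hα ht.1 ht.2 MeasurableSet.univ
  have hbddμ : ∀ k, BddAbove ((fun t => |μk k t - μ t|) '' Icc 0 T) := by
    intro k
    refine ⟨μk k T + μ T, ?_⟩
    rintro y ⟨t, ht, rfl⟩
    have h1 := (hμk k).2.1 t ht.1
    have h2 := (hμk k).2.2 ht.1 hT0 ht.2
    have h3 := hμ.2.1 t ht.1
    have h4 := hμ.2.2 ht.1 hT0 ht.2
    rw [abs_le]
    constructor <;> linarith
  have hLPpt : ∀ k, ∀ t ∈ Icc (0:ℝ) T,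
      levyProkhorovDist (αk k t : Measure ℝ≥0) (α t : Measure ℝ≥0) ≤
      sSup ((fun t => levyProkhorovDist (αk k t : Measure ℝ≥0) (α t : Measure ℝ≥0)) '' Icc 0 T) :=
    fun k t ht => le_csSup (hbddLP k) (mem_image_of_mem _ ht)
  have hμpt : ∀ k, ∀ t ∈ Icc (0:ℝ) T,
      |μk k t - μ t| ≤ sSup ((fun t => |μk k t - μ t|) '' Icc 0 T) :=
    fun k t ht => le_csSup (hbddμ k) (mem_image_of_mem _ ht)
  have stepC : ∀ ρ : ℝ, 0 < ρ → ∀ᶠ k in atTop, ∀ t ∈ Icc (0:ℝ) T,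
      (∀ x : ℝ≥0, |(αk k t (Iic x) : ℝ) - (α t (Iic x) : ℝ)| ≤ ρ) ∧
      |(αk k t univ : ℝ) - (α t univ : ℝ)| ≤ ρ ∧ |μk k t - μ t| ≤ ρ := by
    intro ρ hρ
    obtain ⟨δ, hδpos, hmodT⟩ := fm_modulus (α T) (hαatomless T hT0) (show (0:ℝ) < ρ/4 by linarith)
    set δ' := min δ (ρ/4) with hδ'def
    have hδ'pos : 0 < δ' := lt_min hδpos (by linarith)
    have hδ'δ : δ' ≤ δ := min_le_left _ _
    have hδ'ρ : δ' ≤ ρ/4 := min_le_right _ _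
    have hIic0 : (α T (Iic (0:ℝ≥0)) : ℝ) = 0 := by
      have hs : Iic (0:ℝ≥0) = ({0} : Set ℝ≥0) := by ext y; simp [le_zero_iff]
      rw [hs]
      have := hαatomless T hT0 0
      exact_mod_cast this
    filter_upwards [(hconvα T hT).eventually_lt_const hδ'pos,
      (hconvμ T hT).eventually_lt_const hρ] with k hk1 hk2
    intro t ht
    have hLP : levyProkhorovDist (αk k t : Measure ℝ≥0) (α t : Measure ℝ≥0) < δ' :=
      lt_of_le_of_lt (hLPpt k t ht) hk1
    have hmod_t : ∀ a b : ℝ≥0, a ≤ b → (b:ℝ) ≤ (a:ℝ) + δ' →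
        ((α t) (Iic b) : ℝ) ≤ ((α t) (Iic a) : ℝ) + ρ/4 := by
      intro a b hab hba
      have h1 := fmR_Iic_add_Ioc (α t) hab
      have h2 := fmR_Iic_add_Ioc (α T) hab
      have h3 : ((α t) (Ioc a b) : ℝ) ≤ ((α T) (Ioc a b) : ℝ) :=
        dmup_mono hα ht.1 ht.2 measurableSet_Ioc
      have h4 := hmodT a b hab (by linarith)
      linarith
    have hzero : ((α t) (Iic (Real.toNNReal δ')) : ℝ) ≤ ρ/4 := by
      have h5 : ((α t) (Iic (Real.toNNReal δ')) : ℝ) ≤ ((α T) (Iic (Real.toNNReal δ')) : ℝ) :=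
        dmup_mono hα ht.1 ht.2 measurableSet_Iic
      have h6 := hmodT 0 (Real.toNNReal δ') zero_le (by
        rw [Real.coe_toNNReal _ hδ'pos.le]
        simp
        linarith)
      linarith [hIic0]
    have hcdf := lp_cdf_bounds hδ'pos (show (0:ℝ) ≤ ρ/4 by linarith) hLP hmod_t hzero
    refine ⟨fun x => ?_, ?_, ?_⟩
    · exact (hcdf.1 x).trans (by linarith)
    · exact hcdf.2.trans (by linarith)
    · exact (hμpt k t ht).trans hk2.le
  have master : ∀ ε : ℝ, 0 < ε → ∀ᶠ k in atTop,
      (∀ t ∈ Icc (0:ℝ) T,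
        levyProkhorovDist (ξk k t : Measure ℝ≥0) (ξ t : Measure ℝ≥0) ≤ ε) ∧
      (∀ t ∈ Icc (0:ℝ) T,
        levyProkhorovDist (βk k t : Measure ℝ≥0) (β t : Measure ℝ≥0) ≤ ε) ∧
      (∀ t ∈ Icc (0:ℝ) T, |ιk k t - ι t| ≤ ε) := by
    intro ε hε
    set δD := ε/8 with hδDdef
    have hδD : 0 < δD := by rw [hδDdef]; linarith
    obtain ⟨n₀, hn₀⟩ := ((tendsto_fmR_Ioi_zero (α T)).eventually_lt_const
      (show (0:ℝ) < ε/16 by linarith)).exists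
    obtain ⟨N, hN⟩ := exists_nat_ge ((n₀:ℝ)/δD)
    have hNδ : (n₀:ℝ) ≤ (N:ℝ) * δD := by
      rw [div_le_iff₀ hδD] at hN
      linarith
    set ρ₁ := ε/(16*(2*(N:ℝ)+4)) with hρ₁def
    have hden : (0:ℝ) < 2*(N:ℝ)+4 := by positivity
    have hρ₁ : 0 < ρ₁ := by rw [hρ₁def]; positivity
    set XX := Real.toNNReal ((N:ℝ) * δD) with hXXdef
    have hn₀XX : ((n₀:ℕ):ℝ≥0) ≤ XX := by
      rw [hXXdef]
      refine (Real.le_toNNReal_iff_coe_le (by positivity)).mpr ?_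
      push_cast
      exact hNδ
    filter_upwards [stepC ρ₁ hρ₁] with k hk
    have hDMβk := (hsolk k).2.1
    have hDRιk := (hsolk k).2.2.1
    have hSk := (hsolk k).2.2.2
    set e := 2*ρ₁ with hedef
    have hde : ∀ x : ℝ≥0, ∀ t ∈ Icc (0:ℝ) T, ∀ s ∈ Icc (0:ℝ) t,
        |((αk k s (Iic x):ℝ) - μk k s) - ((α s (Iic x):ℝ) - μ s)| ≤ e := by
      intro x t ht s hs
      have hsT : s ∈ Icc (0:ℝ) T := ⟨hs.1, hs.2.trans ht.2⟩
      have h1 := abs_le.mp ((hk s hsT).1 x)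
      have h2 := abs_le.mp ((hk s hsT).2.2)
      rw [hedef, abs_le]
      constructor <;> linarith [h1.1, h1.2, h2.1, h2.2]
    have hgam : ∀ x : ℝ≥0, ∀ t ∈ Icc (0:ℝ) T,
        |Gamma2 (fun s => ((αk k s) (Iic x):ℝ) - μk k s) t -
          Gamma2 (fun s => ((α s) (Iic x):ℝ) - μ s) t| ≤ e :=
      fun x t ht => gamma2_lip ht.1 (psi_bdd (hμk k) x ht.1) (psi_bdd hμ x ht.1) (hde x t ht)
    have hη : ∀ x : ℝ≥0, ∀ t ∈ Icc (0:ℝ) T,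
        |(((βk k t) (Ioi x):ℝ) + ιk k t) - (((β t) (Ioi x):ℝ) + ι t)| ≤ e := by
      intro x t ht
      rw [sol_eta hDMβk hDRιk hSk x ht.1, sol_eta hDMβ hDRι hS x ht.1]
      exact hgam x t ht
    have hι : ∀ t ∈ Icc (0:ℝ) T, |ιk k t - ι t| ≤ e := by
      intro t ht
      have hlim : Tendsto (fun n : ℕ => (((βk k t) (Ioi ((n:ℝ≥0))):ℝ) + ιk k t) -
          (((β t) (Ioi ((n:ℝ≥0))):ℝ) + ι t)) atTop (𝓝 (ιk k t - ι t)) := by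
        have h1 := (tendsto_fmR_Ioi_zero (βk k t)).add
          (tendsto_const_nhds (x := ιk k t) (f := atTop (α := ℕ)))
        have h2 := (tendsto_fmR_Ioi_zero (β t)).add
          (tendsto_const_nhds (x := ι t) (f := atTop (α := ℕ)))
        have h3 := h1.sub h2
        simpa using h3
      exact le_of_tendsto hlim.abs (Eventually.of_forall (fun n => hη _ t ht))
    have hβIoi : ∀ t ∈ Icc (0:ℝ) T, ∀ x : ℝ≥0,
        |((βk k t) (Ioi x):ℝ) - ((β t) (Ioi x):ℝ)| ≤ 2*e := by
      intro t ht x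
      have h1 := abs_le.mp (hη x t ht)
      have h2 := abs_le.mp (hι t ht)
      rw [abs_le]
      constructor <;> linarith
    have hμd : ∀ t ∈ Icc (0:ℝ) T, |μk k t - μ t| ≤ ρ₁ := fun t ht => (hk t ht).2.2
    have hβuniv : ∀ t ∈ Icc (0:ℝ) T, |((βk k t) univ : ℝ) - ((β t) univ : ℝ)| ≤ ρ₁ + e := by
      intro t ht
      have h1 := hSk.2.2.2 t ht.1
      have h2 := hS.2.2.2 t ht.1
      have h3 := abs_le.mp (hμd t ht)
      have h4 := abs_le.mp (hι t ht)
      rw [abs_le]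
      constructor <;> linarith
    have hβcdf : ∀ t ∈ Icc (0:ℝ) T, ∀ x : ℝ≥0,
        |((βk k t) (Iic x):ℝ) - ((β t) (Iic x):ℝ)| ≤ ρ₁ + 3*e := by
      intro t ht x
      have e1 := fmR_Iic_add_Ioi (βk k t) x
      have e2 := fmR_Iic_add_Ioi (β t) x
      have h1 := abs_le.mp (hβuniv t ht)
      have h2 := abs_le.mp (hβIoi t ht x)
      rw [abs_le]
      constructor <;> linarith
    have hξcdf : ∀ t ∈ Icc (0:ℝ) T, ∀ x : ℝ≥0,
        |((ξk k t) (Iic x):ℝ) - ((ξ t) (Iic x):ℝ)| ≤ 2*e := by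
      intro t ht x
      rw [sol_xi hDMβk hDRιk hSk x ht.1, sol_xi hDMβ hDRι hS x ht.1]
      have h1 := abs_le.mp (hgam x t ht)
      have h2 := abs_le.mp (hde x t ht t (right_mem_Icc.mpr ht.1))
      rw [abs_le]
      constructor <;> linarith
    have hξuniv : ∀ t ∈ Icc (0:ℝ) T, |((ξk k t) univ:ℝ) - ((ξ t) univ:ℝ)| ≤ 2*ρ₁ + e := by
      intro t ht
      have h1 := sol_univ hSk ht.1
      have h2 := sol_univ hS ht.1
      have h3 := abs_le.mp ((hk t ht).2.1)
      have h4 := abs_le.mp (hβuniv t ht)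
      rw [abs_le]
      constructor <;> linarith
    set εD := 8*ρ₁ with hεDdef
    have hεD : 0 < εD := by rw [hεDdef]; linarith
    have hξtail : ∀ t ∈ Icc (0:ℝ) T, ((ξ t) (Ioi XX) : ℝ) ≤ ε/16 := by
      intro t ht
      have ha := sol_xi_Ioi hS XX ht.1
      have hb : ((α t) (Ioi XX):ℝ) ≤ ((α T) (Ioi XX):ℝ) :=
        dmup_mono hα ht.1 ht.2 measurableSet_Ioi
      have hc : ((α T) (Ioi XX):ℝ) ≤ ((α T) (Ioi ((n₀:ℝ≥0))):ℝ) :=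
        fmR_mono _ (Ioi_subset_Ioi hn₀XX)
      linarith [hn₀.le]
    have hβtail : ∀ t ∈ Icc (0:ℝ) T, ((β t) (Ioi XX) : ℝ) ≤ ε/16 := by
      intro t ht
      have ha := sol_beta_Ioi hS XX ht.1
      have hb : ((α t) (Ioi XX):ℝ) ≤ ((α T) (Ioi XX):ℝ) :=
        dmup_mono hα ht.1 ht.2 measurableSet_Ioi
      have hc : ((α T) (Ioi XX):ℝ) ≤ ((α T) (Ioi ((n₀:ℝ≥0))):ℝ) :=
        fmR_mono _ (Ioi_subset_Ioi hn₀XX)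
      linarith [hn₀.le]
    have hbound : 2*δD + (2*(N:ℝ)+4)*εD + 2*(ε/16) ≤ ε := by
      have hval : (2*(N:ℝ)+4)*εD = ε/2 := by
        rw [hεDdef, hρ₁def]
        field_simp
        ring
      rw [hval, hδDdef]
      linarith
    refine ⟨fun t ht => ?_, fun t ht => ?_, fun t ht => ?_⟩
    · refine (lp_of_cdf (ξk k t) (ξ t) N hδD (le_of_lt hεD) (show (0:ℝ) ≤ ε/16 by linarith)
        ?_ ?_ ?_).trans hbound
      · intro x
        exact (hξcdf t ht x).trans (by rw [hedef, hεDdef]; linarith)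
      · exact (hξuniv t ht).trans (by rw [hedef, hεDdef]; linarith)
      · exact hξtail t ht
    · refine (lp_of_cdf (βk k t) (β t) N hδD (le_of_lt hεD) (show (0:ℝ) ≤ ε/16 by linarith)
        ?_ ?_ ?_).trans hbound
      · intro x
        exact (hβcdf t ht x).trans (by rw [hedef, hεDdef]; linarith)
      · exact (hβuniv t ht).trans (by rw [hedef, hεDdef]; linarith)
      · exact hβtail t ht
    · refine (hι t ht).trans ?_
      rw [hedef, hρ₁def]
      rw [div_le_iff₀ (by positivity)] at *
      nlinarith
  have conv_of : ∀ f : ℕ → ℝ → ℝ, (∀ k t, t ∈ Icc (0:ℝ) T → 0 ≤ f k t) →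
      (∀ ε : ℝ, 0 < ε → ∀ᶠ k in atTop, ∀ t ∈ Icc (0:ℝ) T, f k t ≤ ε) →
      Tendsto (fun k => sSup (f k '' Icc 0 T)) atTop (𝓝 0) := by
    intro f hnn hev
    rw [Metric.tendsto_nhds]
    intro ε hε
    filter_upwards [hev (ε/2) (by linarith)] with k hkb
    have hne : (f k '' Icc 0 T).Nonempty := ⟨f k 0, mem_image_of_mem _ h0mem⟩
    have hbdd : BddAbove (f k '' Icc 0 T) := by
      refine ⟨ε/2, ?_⟩
      rintro y ⟨t, ht, rfl⟩
      exact hkb t ht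
    have hub : sSup (f k '' Icc 0 T) ≤ ε/2 := by
      refine csSup_le hne ?_
      rintro y ⟨t, ht, rfl⟩
      exact hkb t ht
    have hlb : 0 ≤ sSup (f k '' Icc 0 T) :=
      (hnn k 0 h0mem).trans (le_csSup hbdd (mem_image_of_mem _ h0mem))
    rw [Real.dist_eq, sub_zero, abs_of_nonneg hlb]
    linarith
  refine ⟨?_, ?_, ?_⟩
  · exact conv_of _ (fun k t _ => ENNReal.toReal_nonneg)
      (fun ε hε => (master ε hε).mono (fun k hk => hk.1))
  · exact conv_of _ (fun k t _ => ENNReal.toReal_nonneg)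
      (fun ε hε => (master ε hε).mono (fun k hk => hk.2.1))
  · exact conv_of _ (fun k t _ => abs_nonneg _)
      (fun ε hε => (master ε hε).mono (fun k hk => hk.2.2))

end
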